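/- Let F be a finite field of characteristic p, K = LaurentSeries F, and t = single 1 1 ∈ K. Then the map g : K × K → K given by g(x, y) = x^p + t·y^p is injective. -/
import Mathlib

theorem frobenius_plane_into_line_injective (F : Type*) [Field F] [Fintype F]
    (p : ℕ) [Fact p.Prime] [CharP F p] :
    Function.Injective
      (fun xy : LaurentSeries F × LaurentSeries F =>
        xy.1 ^ p + HahnSeries.single (1 : ℤ) (1 : F) * xy.2 ^ p) := by
  have hp : p.Prime := Fact.out
  rintro ⟨x1, y1⟩ ⟨x2, y2⟩ h
  simp only [Prod.mk.injEq] at *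
  haveI : CharP (LaurentSeries F) p := charP_of_injective_ringHom (HahnSeries.C_injective (Γ := ℤ) (R := F)) p
  -- rearrange: (x1 - x2)^p = t * (y2 - y1)^p
  have key : (x1 - x2) ^ p = HahnSeries.single (1 : ℤ) (1 : F) * (y2 - y1) ^ p := by
    rw [sub_pow_char, sub_pow_char]
    linear_combination h
  have hy : y2 - y1 = 0 := by
    by_contra hb
    have ha : x1 - x2 ≠ 0 := by
      intro h0
      rw [h0, zero_pow hp.ne_zero] at key
      exact hb (pow_eq_zero_iff hp.ne_zero |>.mp
        ((mul_eq_zero.mp key.symm).resolve_left (by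
          simpa using HahnSeries.single_ne_zero (one_ne_zero : (1:F) ≠ 0))))
    have := congrArg HahnSeries.order key
    rw [HahnSeries.order_pow, HahnSeries.order_mul
        (by simpa using HahnSeries.single_ne_zero (one_ne_zero : (1:F) ≠ 0))
        (pow_ne_zero _ hb),
      HahnSeries.order_single one_ne_zero, HahnSeries.order_pow] at this
    simp only [nsmul_eq_mul] at this
    have hdvd : (p : ℤ) ∣ 1 := ⟨(x1 - x2).order - (y2 - y1).order, by linarith⟩
    have := Int.le_of_dvd one_pos hdvd
    have := hp.two_le
    omega
  have hx : x1 - x2 = 0 := by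
    rw [hy, zero_pow hp.ne_zero, mul_zero, pow_eq_zero_iff hp.ne_zero] at key
    exact key
  exact ⟨sub_eq_zero.mp hx, (sub_eq_zero.mp hy).symm⟩
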